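/- For every k ≥ 1, there are exactly 2^k single-rooted minimal words of height k, and exactly 2^k double-rooted minimal words of height k. -/
import Mathlib


namespace CInfWords

open scoped Classical

/-- Run-length encoding Δ of a word. -/
def rle : List ℕ → List ℕ
  | [] => []
  | [_] => [1]
  | a :: b :: l =>
    if a = b then
      match rle (b :: l) with
      | [] => [1]
      | c :: r => (c + 1) :: r
    else 1 :: rle (b :: l)

/-- Erase a leading `1`, if any. -/
def trim1 : List ℕ → List ℕ
  | 1 :: l => l
  | l => l

/-- The derivative `D`: the run-length encoding with the first and/or the last
symbol erased when they are equal to `1`. -/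
def D (w : List ℕ) : List ℕ := trim1 ((trim1 (rle w).reverse).reverse)

/-- Words over Σ = {1,2}. -/
def IsWord (w : List ℕ) : Prop := ∀ x ∈ w, x = 1 ∨ x = 2

/-- Words over Σ₀ = {0,1,2}. -/
def IsWord0 (w : List ℕ) : Prop := ∀ x ∈ w, x = 0 ∨ x = 1 ∨ x = 2

/-- Σ₀^{++}: words over Σ₀ that are empty or begin with a nonzero symbol. -/
def Spp (w : List ℕ) : Prop := IsWord0 w ∧ (w = [] ∨ w.headI ≠ 0)

/-- C^∞-words: every iterated derivative is a word over Σ = {1,2}. -/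
def Cinf (w : List ℕ) : Prop := ∀ k, IsWord (D^[k] w)

/-- The height of a C^∞-word: the least k with D^[k] w = ε. -/
noncomputable def height (w : List ℕ) : ℕ := sInf {k | D^[k] w = []}

/-- The root of a C^∞-word of height k > 0: its (k-1)-st derivative. -/
noncomputable def root (w : List ℕ) : List ℕ := D^[height w - 1] w

/-- `v` is a primitive of `w`. -/
def Primitive (v w : List ℕ) : Prop := IsWord v ∧ D v = w

/-- The complement: swap 1's and 2's. -/
def compl (w : List ℕ) : List ℕ := w.map (fun x => 3 - x)

/-- Minimal C^∞-words: every derivative is a shortest primitive of the next one. -/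
def Minimal (w : List ℕ) : Prop :=
  Cinf w ∧ 0 < height w ∧
    ∀ j, j + 2 ≤ height w → ∀ v, Primitive v (D^[j+1] w) → (D^[j] w).length ≤ v.length

/-- Maximal C^∞-words: every derivative is a longest primitive of the next one. -/
def Maximal (w : List ℕ) : Prop :=
  Cinf w ∧ 0 < height w ∧
    ∀ j, j + 2 ≤ height w → ∀ v, Primitive v (D^[j+1] w) → v.length ≤ (D^[j] w).length

def LeftMinimal (w : List ℕ) : Prop := ∃ v, Minimal v ∧ w <+: v
def RightMinimal (w : List ℕ) : Prop := ∃ v, Minimal v ∧ w <:+ v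
def LeftMaximal (w : List ℕ) : Prop := ∃ v, Maximal v ∧ w <+: v
def RightMaximal (w : List ℕ) : Prop := ∃ v, Maximal v ∧ w <:+ v

/-- Single-rooted minimal words. -/
def SRMin (w : List ℕ) : Prop := Minimal w ∧ (root w).length = 1

/-- Double-rooted minimal words. -/
def DRMin (w : List ℕ) : Prop := Minimal w ∧ (root w).length = 2

/-- The left frontier Ψ(w). -/
noncomputable def psi (w : List ℕ) : List ℕ :=
  (List.range (height w)).map fun i =>
    if i = 0 then w.getD 0 0
    else if (D^[i] w).getD 0 0 = 2 ∧ (D^[i-1] w).getD 0 0 ≠ (D^[i-1] w).getD 1 0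
      then 0
    else (D^[i] w).getD 0 0

/-- The single-rooted minimal word with left frontier U (if it exists). -/
noncomputable def srmOf (U : List ℕ) : List ℕ :=
  if h : ∃ w, SRMin w ∧ psi w = U then h.choose else []

/-- The double-rooted minimal word with left frontier U (if it exists). -/
noncomputable def drmOf (U : List ℕ) : List ℕ :=
  if h : ∃ w, DRMin w ∧ psi w = U then h.choose else []

/-- Γs: the right frontier of the single-rooted minimal word with left frontier U. -/
noncomputable def Gs (U : List ℕ) : List ℕ := psi (srmOf U).reverse

/-- Γd: the right frontier of the double-rooted minimal word with left frontier U. -/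
noncomputable def Gd (U : List ℕ) : List ℕ := psi (drmOf U).reverse

/-- Θ = Γs ∘ Γd. -/
noncomputable def Th (U : List ℕ) : List ℕ := Gs (Gd U)

/-- Π = Γd ∘ Γs. -/
noncomputable def Pp (U : List ℕ) : List ℕ := Gd (Gs U)

/-- One step in the graph G: from node U, the edge labeled 1 goes to U·1, the edge
labeled 2 goes to U·2, and the edge labeled 0 goes to Θ(U)·2. -/
noncomputable def step (U : List ℕ) (a : ℕ) : List ℕ :=
  if a = 1 then U ++ [1] else if a = 2 then U ++ [2] else Th U ++ [2]

/-- The endpoint of the path in G starting at the origin ε and labeled by W. -/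
noncomputable def pathEnd (W : List ℕ) : List ℕ := W.foldl step []

/-- W ∈ Σ₀^{++} labels a directed path in G from ε to U. -/
def LabelsPath (W U : List ℕ) : Prop := Spp W ∧ pathEnd W = U

/-- ‖U‖: the number of words in Σ₀^{++} labeling a path in G from ε to U. -/
noncomputable def normG (U : List ℕ) : ℕ := {W | LabelsPath W U}.ncard

/-- |U|: the length of the single-rooted minimal word with left frontier U. -/
noncomputable def len (U : List ℕ) : ℕ := (srmOf U).length

/-- u is the minimal part of w: the first (leftmost-occurring) factor of w that
is a single-rooted minimal word of the same height as w. -/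
def IsMinPart (u w : List ℕ) : Prop :=
  ∃ s t, w = s ++ u ++ t ∧ SRMin u ∧ height u = height w ∧
    ∀ u' s' t', w = s' ++ u' ++ t' → SRMin u' → height u' = height w →
      s.length ≤ s'.length


-- trim1 lemmas
@[simp] lemma trim1_nil : trim1 [] = [] := rfl
@[simp] lemma trim1_one (l : List ℕ) : trim1 (1 :: l) = l := rfl
lemma trim1_of_ne (l : List ℕ) (h : l.head? ≠ some 1) : trim1 l = l := by
  match l with
  | [] => rfl
  | 0 :: t => rfl
  | 1 :: t => simp at h
  | (n+2) :: t => rfl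


@[simp] lemma rle_nil : rle [] = [] := rfl
@[simp] lemma rle_single (a : ℕ) : rle [a] = [1] := rfl
lemma rle_cons_cons (a b : ℕ) (l : List ℕ) :
    rle (a :: b :: l) = if a = b then
      match rle (b :: l) with
      | [] => [1]
      | c :: r => (c + 1) :: r
    else 1 :: rle (b :: l) := by
  rw [rle]

lemma rle_ne_nil (l : List ℕ) (h : l ≠ []) : rle l ≠ [] := by
  match l with
  | [a] => simp
  | a :: b :: t =>
    rw [rle_cons_cons]
    split
    · rcases h' : rle (b :: t) with _ | ⟨c, r⟩ <;> simp
    · simp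

lemma rle_cons_same (a : ℕ) (l : List ℕ) (c : ℕ) (r : List ℕ)
    (h : rle (a :: l) = c :: r) : rle (a :: a :: l) = (c + 1) :: r := by
  rw [rle_cons_cons, if_pos rfl, h]

lemma rle_cons_ne (a b : ℕ) (l : List ℕ) (h : a ≠ b) :
    rle (a :: b :: l) = 1 :: rle (b :: l) := by
  rw [rle_cons_cons, if_neg h]

lemma rle_replicate_append (n a : ℕ) (l : List ℕ) (hn : 0 < n)
    (hl : ∀ b, l.head? = some b → b ≠ a) :
    rle (List.replicate n a ++ l) = n :: rle l := by
  induction n with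
  | zero => omega
  | succ n ih =>
    rcases Nat.eq_zero_or_pos n with h0 | h0
    · subst h0
      show rle (a :: l) = 1 :: rle l
      match l with
      | [] => simp
      | b :: t =>
        have hb : b ≠ a := hl b rfl
        rw [rle_cons_ne a b t (Ne.symm hb)]
    · have := ih h0
      have hrep : List.replicate (n+1) a ++ l = a :: (List.replicate n a ++ l) := by
        rw [List.replicate_succ]; rfl
      rw [hrep]
      have hrep2 : List.replicate n a ++ l = a :: (List.replicate (n-1) a ++ l) := by
        conv_lhs => rw [show n = (n-1)+1 by omega, List.replicate_succ, List.cons_append]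
      rw [hrep2] at this ⊢
      exact rle_cons_same a _ _ _ this


def expand (a : ℕ) : List ℕ → List ℕ
  | [] => []
  | n :: l => List.replicate n a ++ expand (3 - a) l

@[simp] lemma expand_nil (a : ℕ) : expand a [] = [] := rfl
lemma expand_cons (a n : ℕ) (l : List ℕ) :
    expand a (n :: l) = List.replicate n a ++ expand (3 - a) l := rfl

lemma length_expand (a : ℕ) (l : List ℕ) : (expand a l).length = l.sum := by
  induction l generalizing a with
  | nil => rfl
  | cons n t ih => simp [expand_cons, ih]

lemma isWord_expand (a : ℕ) (ha : a = 1 ∨ a = 2) (l : List ℕ) : IsWord (expand a l) := by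
  induction l generalizing a with
  | nil => intro x hx; simp at hx
  | cons n t ih =>
    intro x hx
    rw [expand_cons, List.mem_append] at hx
    rcases hx with hx | hx
    · rcases ha with h | h <;> simp [List.eq_of_mem_replicate hx, h]
    · exact ih (3 - a) (by rcases ha with h|h <;> subst h <;> norm_num) x hx

lemma head?_expand (a n : ℕ) (hn : 0 < n) (l : List ℕ) :
    (expand a (n :: l)).head? = some a := by
  rw [expand_cons]
  match n, hn with
  | (m+1), _ => rw [List.replicate_succ]; rfl

lemma rle_expand (a : ℕ) (ha : a = 1 ∨ a = 2) (l : List ℕ) (hl : ∀ n ∈ l, 0 < n) :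
    rle (expand a l) = l := by
  induction l generalizing a with
  | nil => rfl
  | cons n t ih =>
    rw [expand_cons, rle_replicate_append n a _ (hl n (by simp))]
    · rw [ih (3-a) (by rcases ha with h|h <;> subst h <;> norm_num)
        (fun m hm => hl m (by simp [hm]))]
    · intro b hb
      match t with
      | [] => simp at hb
      | m :: t' =>
        rw [head?_expand (3-a) m (hl m (by simp)) t'] at hb
        rcases ha with h|h <;> subst h <;> simp at hb <;> omega

lemma reconstruct (v : List ℕ) (hv : IsWord v) : expand v.headI (rle v) = v := by
  induction v with
  | nil => rfl
  | cons a t ih =>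
    have ha : a = 1 ∨ a = 2 := hv a (by simp)
    match t with
    | [] =>
      simp only [rle_single, List.headI]
      rw [expand_cons]; simp
    | b :: l =>
      have ht : IsWord (b :: l) := fun x hx => hv x (by simp [hx])
      have ihb := ih ht
      by_cases hab : a = b
      · subst hab
        obtain ⟨c, r, hcr⟩ : ∃ c r, rle (a :: l) = c :: r := by
          rcases h : rle (a :: l) with _ | ⟨c, r⟩
          · exact absurd h (rle_ne_nil _ (by simp))
          · exact ⟨c, r, rfl⟩
        rw [rle_cons_same a l c r hcr]
        rw [hcr] at ihb
        simp only [List.headI] at ihb ⊢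
        rw [expand_cons] at ihb ⊢
        rw [List.replicate_succ, List.cons_append, ihb]
      · rw [rle_cons_ne a b l hab]
        simp only [List.headI] at ihb ⊢
        rw [expand_cons]
        have hb : b = 1 ∨ b = 2 := ht b (by simp)
        have h3 : 3 - a = b := by rcases ha with h|h <;> rcases hb with h'|h' <;> omega
        rw [h3, List.replicate_one, List.singleton_append, ihb]

lemma length_eq_sum_rle (v : List ℕ) (hv : IsWord v) : v.length = (rle v).sum := by
  conv_lhs => rw [← reconstruct v hv]
  rw [length_expand]

def trimLast (l : List ℕ) : List ℕ := (trim1 l.reverse).reverse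
def trimboth (l : List ℕ) : List ℕ := trim1 (trimLast l)

lemma D_eq_trimboth (w : List ℕ) : D w = trimboth (rle w) := rfl

lemma trim1_cases (l : List ℕ) : l = trim1 l ∨ l = 1 :: trim1 l := by
  match l with
  | [] => left; rfl
  | 0 :: t => left; rfl
  | 1 :: t => right; rfl
  | (n+2) :: t => left; rfl

lemma length_trim1_le (l : List ℕ) : (trim1 l).length ≤ l.length := by
  rcases trim1_cases l with h | h
  · rw [← h]
  · conv_rhs => rw [h]
    simp

lemma trim1_suffix (l : List ℕ) : trim1 l <:+ l := by
  rcases trim1_cases l with h | h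
  · exact h ▸ List.suffix_refl _
  · conv_rhs => rw [h]
    exact List.suffix_cons _ _

lemma trimLast_prefix (l : List ℕ) : trimLast l <+: l := by
  obtain ⟨t, ht⟩ := trim1_suffix l.reverse
  exact ⟨t.reverse, by rw [trimLast, ← List.reverse_append, ht, List.reverse_reverse]⟩

lemma trimLast_cases (l : List ℕ) : l = trimLast l ∨ l = trimLast l ++ [1] := by
  rcases trim1_cases l.reverse with h | h
  · left
    rw [trimLast, ← h, List.reverse_reverse]
  · right
    rw [trimLast]
    conv_lhs => rw [← List.reverse_reverse l, h]
    simp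

lemma trimLast_append_one (l : List ℕ) : trimLast (l ++ [1]) = l := by
  rw [trimLast, List.reverse_append]
  simp

lemma trimLast_of_ne (l : List ℕ) (h : l.getLast? ≠ some 1) : trimLast l = l := by
  rw [trimLast, trim1_of_ne _ (by rwa [List.head?_reverse]), List.reverse_reverse]

lemma fourOptions (r u : List ℕ) (h : trimboth r = u) :
    r = u ∨ r = 1 :: u ∨ r = u ++ [1] ∨ r = 1 :: (u ++ [1]) := by
  rw [trimboth] at h
  rcases trimLast_cases r with h1 | h1 <;> rcases trim1_cases (trimLast r) with h2 | h2
  · left; rw [h1, h2, h]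
  · right; left; rw [h1, h2, h]
  · right; right; left; rw [h1, h2.trans h]
  · right; right; right; rw [h1, h2, h, List.cons_append]

def pad (u : List ℕ) : List ℕ :=
  (if u.head? = some 1 then [1] else []) ++ u ++ (if u.getLast? = some 1 then [1] else [])

lemma trimboth_pad (u : List ℕ) (hu : u ≠ []) : trimboth (pad u) = u := by
  rw [pad, trimboth]
  by_cases h1 : u.head? = some 1 <;> by_cases h2 : u.getLast? = some 1 <;>
    simp only [h1, h2, if_pos, if_neg, List.nil_append, List.append_nil,
      not_false_iff, if_true, if_false]
  · rw [trimLast_append_one]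
    rfl
  · rw [trimLast_of_ne _ (by rwa [List.getLast?_append_of_ne_nil _ hu])]
    rfl
  · rw [trimLast_append_one, trim1_of_ne _ h1]
  · rw [trimLast_of_ne _ h2, trim1_of_ne _ h1]

lemma not_tb_head (u : List ℕ) (h1 : u.head? = some 1) :
    trimboth u ≠ u ∧ trimboth (u ++ [1]) ≠ u := by
  obtain ⟨u', rfl⟩ := List.head?_eq_some_iff.mp h1
  constructor
  · intro h
    rcases trimLast_cases (1 :: u') with hs | hs
    · rw [trimboth, ← hs, trim1_one] at h
      have := congrArg List.length h
      simp at this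
    · rcases hts : trimLast (1 :: u') with _ | ⟨c, t⟩
      · rw [trimboth, hts] at h
        simp at h
      · rw [hts] at hs
        simp only [List.cons_append] at hs
        obtain ⟨rfl, hu'⟩ : 1 = c ∧ u' = t ++ [1] := by
          constructor
          · exact (List.cons.injEq _ _ _ _ ▸ hs).1
          · exact (List.cons.injEq _ _ _ _ ▸ hs).2
        rw [trimboth, hts, trim1_one] at h
        have := congrArg List.length h
        rw [hu'] at this
        simp at this
        omega
  · intro h
    rw [trimboth, trimLast_append_one, trim1_one] at h
    have := congrArg List.length h
    simp at this

lemma not_tb_last (u : List ℕ) (h2 : u.getLast? = some 1) :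
    trimboth u ≠ u ∧ trimboth (1 :: u) ≠ u := by
  obtain ⟨t, rfl⟩ := List.getLast?_eq_some_iff.mp h2
  constructor
  · intro h
    rw [trimboth, trimLast_append_one] at h
    have hl := congrArg List.length h
    have hle := length_trim1_le t
    simp at hl
    omega
  · intro h
    rw [trimboth, show (1 :: (t ++ [1])) = (1 :: t) ++ [1] by simp,
      trimLast_append_one, trim1_one] at h
    have := congrArg List.length h
    simp at this

lemma sum_pad (u : List ℕ) :
    (pad u).sum = u.sum + (if u.head? = some 1 then 1 else 0)
      + (if u.getLast? = some 1 then 1 else 0) := by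
  rw [pad]
  by_cases h1 : u.head? = some 1 <;> by_cases h2 : u.getLast? = some 1 <;>
    simp [h1, h2] <;> omega

lemma rle_of_D_eq (v u : List ℕ) (hu : u ≠ []) (hD : D v = u) :
    rle v = pad u ∨ (pad u).sum + 1 ≤ (rle v).sum := by
  rw [D_eq_trimboth] at hD
  have h4 := fourOptions (rle v) u hD
  have hsum := sum_pad u
  by_cases h1 : u.head? = some 1 <;> by_cases h2 : u.getLast? = some 1 <;>
    rw [pad] at * <;> simp only [h1, h2, if_true, if_false, if_pos, if_neg,
      not_false_iff, List.nil_append, List.append_nil] at hsum ⊢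
  · rcases h4 with h | h | h | h
    · exact absurd (h ▸ hD) (not_tb_head u h1).1
    · exact absurd (h ▸ hD) (not_tb_last u h2).2
    · exact absurd (h ▸ hD) (not_tb_head u h1).2
    · left; rw [h]; simp
  · rcases h4 with h | h | h | h
    · exact absurd (h ▸ hD) (not_tb_head u h1).1
    · left; rw [h]; rfl
    · exact absurd (h ▸ hD) (not_tb_head u h1).2
    · right; rw [h]; simp <;> omega
  · rcases h4 with h | h | h | h
    · exact absurd (h ▸ hD) (not_tb_last u h2).1
    · exact absurd (h ▸ hD) (not_tb_last u h2).2
    · left; rw [h]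
    · right; rw [h]; simp <;> omega
  · rcases h4 with h | h | h | h
    · left; rw [h]
    · right; rw [h]; simp <;> omega
    · right; rw [h]; simp
    · right; rw [h]; simp <;> omega


def P (a : ℕ) (u : List ℕ) : List ℕ := expand a (pad u)

lemma pad_pos (u : List ℕ) (hu : IsWord u) : ∀ n ∈ pad u, 0 < n := by
  intro n hn
  rw [pad] at hn
  simp only [List.mem_append] at hn
  rcases hn with (hn | hn) | hn
  · split at hn <;> simp at hn
    omega
  · rcases hu n hn with h | h <;> omega
  · split at hn <;> simp at hn
    omega

lemma pad_ne_nil (u : List ℕ) (hu : u ≠ []) : pad u ≠ [] := by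
  rw [pad]
  simp [hu]

lemma sum_pad_pos (u : List ℕ) (hu : IsWord u) (hne : u ≠ []) : 0 < (pad u).sum := by
  match hp : pad u with
  | [] => exact absurd hp (pad_ne_nil u hne)
  | n :: t =>
    have := pad_pos u hu n (by rw [hp]; simp)
    simp
    omega

lemma isWord_P (a : ℕ) (ha : a = 1 ∨ a = 2) (u : List ℕ) : IsWord (P a u) :=
  isWord_expand a ha _

lemma length_P (a : ℕ) (u : List ℕ) : (P a u).length = (pad u).sum := length_expand _ _

lemma rle_P (a : ℕ) (ha : a = 1 ∨ a = 2) (u : List ℕ) (hu : IsWord u) :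
    rle (P a u) = pad u := rle_expand a ha _ (pad_pos u hu)

lemma D_P (a : ℕ) (ha : a = 1 ∨ a = 2) (u : List ℕ) (hu : IsWord u) (hne : u ≠ []) :
    D (P a u) = u := by
  rw [D_eq_trimboth, rle_P a ha u hu, trimboth_pad u hne]

lemma P_ne_nil (a : ℕ) (u : List ℕ) (hu : IsWord u) (hne : u ≠ []) : P a u ≠ [] := by
  intro h
  have := congrArg List.length h
  rw [length_P] at this
  have := sum_pad_pos u hu hne
  simp at *
  omega

lemma head?_P (a : ℕ) (u : List ℕ) (hu : IsWord u) (hne : u ≠ []) :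
    (P a u).head? = some a := by
  match hp : pad u with
  | [] => exact absurd hp (pad_ne_nil u hne)
  | n :: t =>
    have hpos := pad_pos u hu n (by rw [hp]; simp)
    rw [P, hp]
    exact head?_expand a n hpos t

lemma primitive_P (a : ℕ) (ha : a = 1 ∨ a = 2) (u : List ℕ) (hu : IsWord u) (hne : u ≠ []) :
    Primitive (P a u) u := ⟨isWord_P a ha u, D_P a ha u hu hne⟩

/-- P a u is a shortest primitive. -/
lemma P_shortest (a : ℕ) (u : List ℕ) (hne : u ≠ []) (v : List ℕ) (hv : Primitive v u) :
    (P a u).length ≤ v.length := by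
  obtain ⟨hw, hD⟩ := hv
  rw [length_P, length_eq_sum_rle v hw]
  rcases rle_of_D_eq v u hne hD with h | h
  · rw [h]
  · omega

/-- Any shortest primitive is P 1 u or P 2 u. -/
lemma shortest_eq_P (u : List ℕ) (hne : u ≠ []) (v : List ℕ) (hv : Primitive v u)
    (hlen : v.length = (pad u).sum) : v = P 1 u ∨ v = P 2 u := by
  obtain ⟨hw, hD⟩ := hv
  rcases rle_of_D_eq v u hne hD with h | h
  · have hrec := reconstruct v hw
    rw [h] at hrec
    have hvne : v ≠ [] := by
      intro h0
      rw [h0] at h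
      exact pad_ne_nil u hne h.symm
    have hhead : v.headI = 1 ∨ v.headI = 2 := by
      match v, hvne with
      | b :: t, _ => exact hw b (by simp)
    rcases hhead with hh | hh
    · left; rw [← hrec, hh]; rfl
    · right; rw [← hrec, hh]; rfl
  · rw [length_eq_sum_rle v hw] at hlen
    omega


@[simp] lemma D_nil : D [] = [] := rfl

lemma iterate_D_nil (k : ℕ) : D^[k] ([] : List ℕ) = [] := by
  induction k with
  | zero => rfl
  | succ k ih => rw [Function.iterate_succ_apply, D_nil, ih]

@[simp] lemma height_nil : height ([] : List ℕ) = 0 := by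
  rw [height]
  exact Nat.sInf_eq_zero.mpr (Or.inl rfl)

lemma height_ne_nil (w : List ℕ) (h : height w ≠ 0) : w ≠ [] := by
  intro h0; rw [h0] at h; simp at h

lemma nonempty_of_height_pos (w : List ℕ) (h : height w ≠ 0) :
    {k | D^[k] w = []}.Nonempty := by
  by_contra hc
  rw [Set.not_nonempty_iff_eq_empty] at hc
  rw [height, hc, Nat.sInf_empty] at h
  exact h rfl

lemma iterate_height (w : List ℕ) (h : height w ≠ 0) : D^[height w] w = [] :=
  Nat.sInf_mem (nonempty_of_height_pos w h)

lemma height_succ (w : List ℕ) (hw : w ≠ []) (hex : ∃ k, D^[k] (D w) = []) :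
    height w = height (D w) + 1 := by
  obtain ⟨k, hk⟩ := hex
  have hne : {j | D^[j] (D w) = []}.Nonempty := ⟨k, hk⟩
  have hmem : D^[height (D w)] (D w) = [] := Nat.sInf_mem hne
  have hmem' : D^[height (D w) + 1] w = [] := by
    rw [Function.iterate_succ_apply]; exact hmem
  apply le_antisymm
  · exact Nat.sInf_le hmem'
  · rw [height]
    refine le_csInf ⟨height (D w) + 1, hmem'⟩ ?_
    intro j hj
    match j, hj with
    | 0, hj => exact absurd hj hw
    | j+1, hj =>
      have : j ∈ {j | D^[j] (D w) = []} := by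
        rw [Set.mem_setOf_eq, ← Function.iterate_succ_apply]
        exact hj
      have := Nat.sInf_le this
      omega


def Sset (r k : ℕ) : Set (List ℕ) := {w | Minimal w ∧ height w = k ∧ (root w).length = r}

lemma ne_nil_of_mem_Sset (r k : ℕ) (hk : 1 ≤ k) (u : List ℕ) (hu : u ∈ Sset r k) :
    u ≠ [] := by
  intro h0
  obtain ⟨_, hh, _⟩ := hu
  rw [h0, height_nil] at hh
  omega

lemma backward (r k : ℕ) (hk : 1 ≤ k) (a : ℕ) (ha : a = 1 ∨ a = 2) (u : List ℕ)
    (hu : u ∈ Sset r k) : P a u ∈ Sset r (k+1) := by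
  obtain ⟨⟨hC, hpos, hmin⟩, hh, hr⟩ := hu
  have hne : u ≠ [] := ne_nil_of_mem_Sset r k hk u ⟨⟨hC, hpos, hmin⟩, hh, hr⟩
  have hW : IsWord u := hC 0
  have hD : D (P a u) = u := D_P a ha u hW hne
  have hPne : P a u ≠ [] := P_ne_nil a u hW hne
  have hit : ∀ j, D^[j+1] (P a u) = D^[j] u := by
    intro j; rw [Function.iterate_succ_apply, hD]
  have hexu : D^[k] u = [] := by
    rw [← hh]; exact iterate_height u (by omega)
  have hhP : height (P a u) = k + 1 := by
    rw [height_succ _ hPne ⟨k, by rw [hD]; exact hexu⟩, hD, hh]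
  refine ⟨⟨?_, ?_, ?_⟩, hhP, ?_⟩
  · intro j
    match j with
    | 0 => exact isWord_P a ha u
    | j+1 => rw [hit]; exact hC j
  · omega
  · intro j hj v hv
    match j with
    | 0 =>
      rw [hit 0] at hv
      simp only [Function.iterate_zero_apply]
      exact P_shortest a u hne v hv
    | j+1 =>
      rw [hit (j+1)] at hv
      rw [hit j]
      rw [hhP] at hj
      exact hmin j (by omega) v hv
  · rw [root, hhP]
    simp only [Nat.add_sub_cancel]
    have : D^[k] (P a u) = D^[k-1] u := by
      conv_lhs => rw [show k = (k-1)+1 by omega]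
      rw [hit]
    rw [this]
    rw [root, hh] at hr
    exact hr

lemma forward (r k : ℕ) (hk : 1 ≤ k) (w : List ℕ) (hw : w ∈ Sset r (k+1)) :
    ∃ a u, (a = 1 ∨ a = 2) ∧ u ∈ Sset r k ∧ w = P a u := by
  obtain ⟨⟨hC, hpos, hmin⟩, hh, hr⟩ := hw
  have hwne : w ≠ [] := by
    intro h0
    rw [h0, height_nil] at hh
    omega
  have hWw : IsWord w := hC 0
  set u := D w with hu
  have hit : ∀ j, D^[j+1] w = D^[j] u := by
    intro j; rw [Function.iterate_succ_apply, hu]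
  have hDk1 : D^[k+1] w = [] := by rw [← hh]; exact iterate_height w (by omega)
  have hexu : D^[k] u = [] := by rw [← hit]; exact hDk1
  have hhu : height u = k := by
    have := height_succ w hwne ⟨k, hexu⟩
    rw [← hu] at this
    omega
  have hune : u ≠ [] := by
    intro h0
    rw [h0, height_nil] at hhu
    omega
  have hCu : Cinf u := by
    intro j
    rw [← hit]
    exact hC (j+1)
  have hWu : IsWord u := hCu 0
  have hmin0 := hmin 0 (by omega)
  simp only [Function.iterate_zero_apply] at hmin0
  rw [hit 0, Function.iterate_zero_apply] at hmin0
  have hwprim : Primitive w u := ⟨hWw, rfl⟩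
  have hle : w.length ≤ (pad u).sum := by
    have := hmin0 (P 1 u) (primitive_P 1 (Or.inl rfl) u hWu hune)
    rwa [length_P] at this
  have hge : (pad u).sum ≤ w.length := by
    have := P_shortest 1 u hune w hwprim
    rwa [length_P] at this
  have heq : w.length = (pad u).sum := le_antisymm hle hge
  have hrootu : (root u).length = r := by
    rw [root, hhu]
    have : D^[k-1] u = D^[k] w := by
      conv_rhs => rw [show k = (k-1)+1 by omega]
      rw [hit]
    rw [this]
    rw [root, hh, Nat.add_sub_cancel] at hr
    exact hr
  have huS : u ∈ Sset r k := by
    refine ⟨⟨hCu, by omega, ?_⟩, hhu, hrootu⟩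
    intro j hj v hv
    have := hmin (j+1) (by omega) v (by rwa [hit (j+1)])
    rwa [hit j] at this
  rcases shortest_eq_P u hune w hwprim heq with h | h
  · exact ⟨1, u, Or.inl rfl, huS, h⟩
  · exact ⟨2, u, Or.inr rfl, huS, h⟩

lemma Sset_succ (r k : ℕ) (hk : 1 ≤ k) :
    Sset r (k+1) = (P 1 '' Sset r k) ∪ (P 2 '' Sset r k) := by
  ext w
  constructor
  · intro hw
    obtain ⟨a, u, ha, huS, rfl⟩ := forward r k hk w hw
    rcases ha with rfl | rfl
    · exact Or.inl ⟨u, huS, rfl⟩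
    · exact Or.inr ⟨u, huS, rfl⟩
  · rintro (⟨u, huS, rfl⟩ | ⟨u, huS, rfl⟩)
    · exact backward r k hk 1 (Or.inl rfl) u huS
    · exact backward r k hk 2 (Or.inr rfl) u huS

lemma injOn_P (r k : ℕ) (hk : 1 ≤ k) (a : ℕ) (ha : a = 1 ∨ a = 2) :
    Set.InjOn (P a) (Sset r k) := by
  intro u1 h1 u2 h2 heq
  have hW1 : IsWord u1 := h1.1.1 0
  have hW2 : IsWord u2 := h2.1.1 0
  have hne1 := ne_nil_of_mem_Sset r k hk u1 h1
  have hne2 := ne_nil_of_mem_Sset r k hk u2 h2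
  have := congrArg D heq
  rwa [D_P a ha u1 hW1 hne1, D_P a ha u2 hW2 hne2] at this

lemma card_step (r k : ℕ) (hk : 1 ≤ k) (hfin : (Sset r k).Finite) :
    (Sset r (k+1)).Finite ∧ (Sset r (k+1)).ncard = 2 * (Sset r k).ncard := by
  rw [Sset_succ r k hk]
  have hdisj : Disjoint (P 1 '' Sset r k) (P 2 '' Sset r k) := by
    rw [Set.disjoint_left]
    rintro x ⟨u, huS, rfl⟩ ⟨u', huS', hx⟩
    have h1 : (P 1 u).head? = some 1 :=
      head?_P 1 u (huS.1.1 0) (ne_nil_of_mem_Sset r k hk u huS)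
    have h2 : (P 2 u').head? = some 2 :=
      head?_P 2 u' (huS'.1.1 0) (ne_nil_of_mem_Sset r k hk u' huS')
    rw [hx, h1] at h2
    simp at h2
  constructor
  · exact (hfin.image _).union (hfin.image _)
  · rw [Set.ncard_union_eq hdisj (hfin.image _) (hfin.image _),
      Set.ncard_image_of_injOn (injOn_P r k hk 1 (Or.inl rfl)),
      Set.ncard_image_of_injOn (injOn_P r k hk 2 (Or.inr rfl))]
    omega

lemma card_Sset (r : ℕ) (hfin1 : (Sset r 1).Finite) (hcard1 : (Sset r 1).ncard = 2) :
    ∀ k, 1 ≤ k → (Sset r k).Finite ∧ (Sset r k).ncard = 2 ^ k := by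
  intro k
  induction k with
  | zero => omega
  | succ k ih =>
    intro _
    rcases Nat.eq_zero_or_pos k with rfl | hk
    · exact ⟨hfin1, by rw [hcard1]; rfl⟩
    · obtain ⟨hf, hc⟩ := ih hk
      obtain ⟨hf', hc'⟩ := card_step r k hk hf
      exact ⟨hf', by rw [hc', hc, pow_succ]; ring⟩

lemma minimal_h1 (w : List ℕ) (hw : IsWord w) (hne : w ≠ []) (hD : D w = []) :
    Minimal w ∧ height w = 1 := by
  have hh : height w = 1 := by
    rw [height_succ w hne ⟨0, by rw [hD]; rfl⟩, hD, height_nil]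
  refine ⟨⟨?_, by omega, ?_⟩, hh⟩
  · intro j
    match j with
    | 0 => exact hw
    | j+1 =>
      rw [Function.iterate_succ_apply, hD, iterate_D_nil]
      intro x hx
      simp at hx
  · intro j hj
    omega

lemma Sset_single_one : Sset 1 1 = {[1], [2]} := by
  ext w
  constructor
  · rintro ⟨⟨hC, hpos, hmin⟩, hh, hr⟩
    rw [root, hh, Nat.sub_self, Function.iterate_zero_apply] at hr
    obtain ⟨x, rfl⟩ := List.length_eq_one_iff.mp hr
    rcases hC 0 x (by simp) with rfl | rfl
    · exact Or.inl rfl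
    · exact Or.inr rfl
  · rintro (rfl | rfl)
    · obtain ⟨hm, hh⟩ := minimal_h1 [1] (by intro x hx; simp at hx; omega) (by simp) rfl
      exact ⟨hm, hh, by rw [root, hh]; rfl⟩
    · obtain ⟨hm, hh⟩ := minimal_h1 [2] (by intro x hx; simp at hx; omega) (by simp) rfl
      exact ⟨hm, hh, by rw [root, hh]; rfl⟩

lemma Sset_double_one : Sset 2 1 = {[1,2], [2,1]} := by
  ext w
  constructor
  · rintro ⟨⟨hC, hpos, hmin⟩, hh, hr⟩
    have hD1 : D w = [] := by
      have := iterate_height w (by omega)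
      rwa [hh, Function.iterate_one] at this
    rw [root, hh, Nat.sub_self, Function.iterate_zero_apply] at hr
    obtain ⟨x, y, rfl⟩ := List.length_eq_two.mp hr
    have hx : x = 1 ∨ x = 2 := hC 0 x (by simp)
    have hy : y = 1 ∨ y = 2 := hC 0 y (by simp)
    have hxy : x ≠ y := by
      rintro rfl
      rcases hx with rfl | rfl
      · exact absurd hD1 (by decide)
      · exact absurd hD1 (by decide)
    rcases hx with rfl | rfl <;> rcases hy with rfl | rfl
    · omega
    · exact Or.inl rfl
    · exact Or.inr rfl
    · omega
  · rintro (rfl | rfl)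
    · obtain ⟨hm, hh⟩ := minimal_h1 [1,2] (by intro x hx; simp at hx; omega)
        (by simp) (by decide)
      exact ⟨hm, hh, by rw [root, hh]; rfl⟩
    · obtain ⟨hm, hh⟩ := minimal_h1 [2,1] (by intro x hx; simp at hx; omega)
        (by simp) (by decide)
      exact ⟨hm, hh, by rw [root, hh]; rfl⟩



/-- for every k ≥ 1 there are exactly 2^k single-rooted minimal words
of height k and exactly 2^k double-rooted minimal words of height k. -/
theorem count_minimal_words (k : ℕ) (hk : 1 ≤ k) :
    {w | SRMin w ∧ height w = k}.ncard = 2 ^ k ∧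
    {w | DRMin w ∧ height w = k}.ncard = 2 ^ k := by
  have h1 : {w | SRMin w ∧ height w = k} = Sset 1 k := by
    ext w
    simp only [Set.mem_setOf_eq, SRMin, Sset]
    tauto
  have h2 : {w | DRMin w ∧ height w = k} = Sset 2 k := by
    ext w
    simp only [Set.mem_setOf_eq, DRMin, Sset]
    tauto
  have hne1 : ([1] : List ℕ) ≠ [2] := by simp
  have hne2 : ([1,2] : List ℕ) ≠ [2,1] := by simp
  have f1 : (Sset 1 1).Finite := by
    rw [Sset_single_one]; exact (Set.finite_singleton _).insert _
  have f2 : (Sset 2 1).Finite := by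
    rw [Sset_double_one]; exact (Set.finite_singleton _).insert _
  have c1 : (Sset 1 1).ncard = 2 := by rw [Sset_single_one]; exact Set.ncard_pair hne1
  have c2 : (Sset 2 1).ncard = 2 := by rw [Sset_double_one]; exact Set.ncard_pair hne2
  rw [h1, h2]
  exact ⟨(card_Sset 1 f1 c1 k hk).2, (card_Sset 2 f2 c2 k hk).2⟩


end CInfWords
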